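/- Fix n ≥ 1, a point x⁰ ∈ ℝⁿ, and a positive real Δ₁ = Δ₂ = ⋯ = Δ_n =: h (so the sample region is a hypercube of side h), with Δ = hⁿ and Δ_S = h√n. Let f : ℝⁿ → ℝ be twice continuously differentiable on an open set containing the hypercube R(x⁰;d) = {x⁰ + x : 0 ≤ x_i ≤ h}, with ∇f Lipschitz continuous with constant L_{∇f} on R(x⁰;d). Define w ∈ ℝⁿ by w_i = ∫_{R(0;d)} x_i · (f(x⁰+x) − f(x⁰) − ∇f(x⁰)ᵀx) dx over the box ∏_{i=1}^n [0, h], and let D = h·Id_n. Then ‖D⁻¹ w‖ ≤ (√n / 24) · ((2n+1)/n) · L_{∇f} · Δ · Δ_S². -/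

import Mathlib

open scoped BigOperators
open MeasureTheory

noncomputable section

/-- Interpret a plain vector in `Fin n → ℝ` as an element of Euclidean space,
so that `‖·‖` is the Euclidean norm. -/
def vecE {n : ℕ} (v : Fin n → ℝ) : EuclideanSpace ℝ (Fin n) :=
  (EuclideanSpace.equiv (Fin n) ℝ).symm v

/-- The cube `[0,h]ⁿ` in Euclidean space. -/
def cube (n : ℕ) (h : ℝ) : Set (EuclideanSpace ℝ (Fin n)) :=
  {x | ∀ l, x l ∈ Set.Icc (0 : ℝ) h}

lemma taylor_quad {n : ℕ} (f : EuclideanSpace ℝ (Fin n) → ℝ)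
    (U s : Set (EuclideanSpace ℝ (Fin n))) (hU : IsOpen U) (hsU : s ⊆ U)
    (hconv : Convex ℝ s)
    (hf : ContDiffOn ℝ 2 f U) (L : NNReal)
    (hlip : LipschitzOnWith L (gradient f) s)
    (a x : EuclideanSpace ℝ (Fin n))
    (ha : a ∈ s) (hb : a + x ∈ s) :
    |f (a + x) - f a - (inner ℝ (gradient f a) x : ℝ)| ≤ (L : ℝ) / 2 * ‖x‖ ^ 2 := by
  set c : ℝ → EuclideanSpace ℝ (Fin n) := fun t => a + t • x with hc
  have hseg : ∀ t ∈ Set.Icc (0:ℝ) 1, c t ∈ s := by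
    intro t ht
    have h1 := hconv.add_smul_sub_mem ha hb ht
    simpa using h1
  have hdiff : ∀ y ∈ U, DifferentiableAt ℝ f y := fun y hy =>
    (hf.contDiffAt (hU.mem_nhds hy)).differentiableAt two_ne_zero
  set φ : ℝ → ℝ := fun t => (inner ℝ (gradient f (c t)) x : ℝ) with hφ
  have hderiv : ∀ t ∈ Set.uIcc (0:ℝ) 1, HasDerivAt (fun t => f (c t)) (φ t) t := by
    intro t ht
    rw [Set.uIcc_of_le zero_le_one] at ht
    have hyU : c t ∈ U := hsU (hseg t ht)
    have hg : HasFDerivAt f ((InnerProductSpace.toDual ℝ _) (gradient f (c t))) (c t) :=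
      (hdiff _ hyU).hasGradientAt.hasFDerivAt
    have hcder : HasDerivAt c x t := by
      have : HasDerivAt (fun t : ℝ => t • x) ((1:ℝ) • x) t :=
        (hasDerivAt_id t).smul_const x
      simpa [hc] using this.const_add a
    exact hg.comp_hasDerivAt t hcder
  have hcont : ContinuousOn φ (Set.Icc (0:ℝ) 1) := by
    have hGc : ContinuousOn (fun t => gradient f (c t)) (Set.Icc (0:ℝ) 1) := by
      apply (hlip.continuousOn).comp
      · exact (continuous_const.add (continuous_id.smul continuous_const)).continuousOn
      · exact hseg
    exact hGc.inner continuousOn_const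
  have hint : IntervalIntegrable φ volume 0 1 := by
    apply ContinuousOn.intervalIntegrable
    rwa [Set.uIcc_of_le zero_le_one]
  have key : ∫ t in (0:ℝ)..1, φ t = f (a + x) - f a := by
    have := intervalIntegral.integral_eq_sub_of_hasDerivAt hderiv hint
    simpa [hc] using this
  have hrepr : f (a + x) - f a - (inner ℝ (gradient f a) x : ℝ)
      = ∫ t in (0:ℝ)..1, (φ t - (inner ℝ (gradient f a) x : ℝ)) := by
    rw [intervalIntegral.integral_sub hint intervalIntegrable_const, key,
      intervalIntegral.integral_const]
    simp
  rw [hrepr]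
  have hbound : ∀ t ∈ Set.Ioc (0:ℝ) 1,
      ‖φ t - (inner ℝ (gradient f a) x : ℝ)‖ ≤ (L : ℝ) * ‖x‖ ^ 2 * t := by
    intro t ht
    have htI : t ∈ Set.Icc (0:ℝ) 1 := ⟨le_of_lt ht.1, ht.2⟩
    have h1 : φ t - (inner ℝ (gradient f a) x : ℝ)
        = (inner ℝ (gradient f (c t) - gradient f a) x : ℝ) := by
      rw [inner_sub_left]
    rw [h1]
    calc ‖(inner ℝ (gradient f (c t) - gradient f a) x : ℝ)‖
        ≤ ‖gradient f (c t) - gradient f a‖ * ‖x‖ := norm_inner_le_norm _ _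
      _ ≤ (L : ℝ) * ‖c t - a‖ * ‖x‖ := by
          have := hlip.norm_sub_le (hseg t htI) ha
          exact mul_le_mul_of_nonneg_right this (norm_nonneg _)
      _ = (L : ℝ) * ‖x‖ ^ 2 * t := by
          have : c t - a = t • x := by simp [hc]
          rw [this, norm_smul]
          simp [abs_of_nonneg (le_of_lt ht.1)]
          ring
  have hval : ∫ t in (0:ℝ)..1, (L : ℝ) * ‖x‖ ^ 2 * t = (L : ℝ) / 2 * ‖x‖ ^ 2 := by
    rw [intervalIntegral.integral_const_mul, integral_id]
    ring
  calc |∫ t in (0:ℝ)..1, (φ t - (inner ℝ (gradient f a) x : ℝ))|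
      ≤ |∫ t in (0:ℝ)..1, (L : ℝ) * ‖x‖ ^ 2 * t| := by
        rw [← Real.norm_eq_abs]
        refine (intervalIntegral.norm_integral_le_of_norm_le zero_le_one ?_ ?_).trans (le_abs_self _)
        · filter_upwards with t ht
          simpa using hbound t (by simpa [Set.uIoc_of_le (zero_le_one)] using ht)
        · exact (continuous_const.mul continuous_id).intervalIntegrable 0 1
    _ = (L : ℝ) / 2 * ‖x‖ ^ 2 := by
        rw [hval]; exact abs_of_nonneg (by positivity)

lemma norm_sq_eq {n : ℕ} (x : EuclideanSpace ℝ (Fin n)) :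
    ‖x‖ ^ 2 = ∑ j, (x j) ^ 2 := by
  rw [EuclideanSpace.norm_eq, Real.sq_sqrt (by positivity)]
  simp [sq_abs]

lemma cube_eq_preimage (n : ℕ) (h : ℝ) :
    cube n h = (MeasurableEquiv.toLp 2 (Fin n → ℝ)).symm ⁻¹'
      (Set.pi Set.univ fun _ => Set.Icc (0:ℝ) h) := by
  ext x
  simp only [cube, Set.mem_setOf_eq, Set.mem_preimage, Set.mem_pi, Set.mem_univ,
    forall_true_left, MeasurableEquiv.coe_toLp]
  rfl

lemma isCompact_cube (n : ℕ) (h : ℝ) : IsCompact (cube n h) := by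
  rw [cube_eq_preimage]
  have : IsCompact (Set.pi Set.univ fun _ : Fin n => Set.Icc (0:ℝ) h) :=
    isCompact_univ_pi fun _ => isCompact_Icc
  exact ((EuclideanSpace.equiv (Fin n) ℝ).toHomeomorph.isCompact_preimage).2 this

lemma measurableSet_cube (n : ℕ) (h : ℝ) : MeasurableSet (cube n h) :=
  (isCompact_cube n h).isClosed.measurableSet

lemma integral_coord_mul_sq (n : ℕ) (h : ℝ) (hh : 0 ≤ h) (i j : Fin n) :
    ∫ x in cube n h, x i * (x j) ^ 2 =
      h ^ (n + 3) / (if j = i then 4 else 6) := by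
  classical
  set box : Set (Fin n → ℝ) := Set.pi Set.univ fun _ => Set.Icc (0:ℝ) h with hboxdef
  have hbox : MeasurableSet box := MeasurableSet.univ_pi fun _ => measurableSet_Icc
  set el : Fin n → ℕ := fun l => (if l = i then 1 else 0) + (if l = j then 2 else 0) with hel
  have h1 : ∫ x in cube n h, x i * (x j) ^ 2 = ∫ y in box, y i * (y j) ^ 2 := by
    rw [cube_eq_preimage]
    exact (EuclideanSpace.volume_preserving_symm_measurableEquiv_toLp (Fin n)).setIntegral_preimage_emb
      (MeasurableEquiv.toLp 2 (Fin n → ℝ)).symm.measurableEmbedding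
      (fun y : Fin n → ℝ => y i * y j ^ 2) box
  have h2 : ∀ y : Fin n → ℝ, box.indicator (fun y => y i * (y j) ^ 2) y
      = ∏ l, (Set.Icc (0:ℝ) h).indicator (fun t => t ^ el l) (y l) := by
    intro y
    by_cases hy : y ∈ box
    · rw [Set.indicator_of_mem hy]
      have hmem : ∀ l, (Set.Icc (0:ℝ) h).indicator (fun t => t ^ el l) (y l)
          = (y l) ^ el l := fun l => Set.indicator_of_mem (hy l (Set.mem_univ l)) _
      simp_rw [hmem, hel, pow_add]
      rw [Finset.prod_mul_distrib]
      simp [pow_ite, Finset.prod_ite_eq']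
    · rw [Set.indicator_of_notMem hy]
      obtain ⟨l, hl⟩ : ∃ l, y l ∉ Set.Icc (0:ℝ) h := by
        simp only [hboxdef, Set.mem_pi, Set.mem_univ, forall_true_left, not_forall] at hy
        exact hy
      exact (Finset.prod_eq_zero (Finset.mem_univ l)
        (Set.indicator_of_notMem hl _)).symm
  have h3 : ∫ y in box, y i * (y j) ^ 2
      = ∏ l, ∫ t : ℝ, (Set.Icc (0:ℝ) h).indicator (fun t => t ^ el l) t := by
    rw [← integral_indicator hbox]
    simp_rw [h2]
    exact integral_fintype_prod_eq_prod
      fun l => (Set.Icc (0:ℝ) h).indicator (fun t => t ^ el l)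
  have h4 : ∀ k : ℕ, ∫ t : ℝ, (Set.Icc (0:ℝ) h).indicator (fun t => t ^ k) t
      = h ^ (k+1) / ((k:ℝ)+1) := by
    intro k
    rw [integral_indicator measurableSet_Icc, integral_Icc_eq_integral_Ioc,
      ← intervalIntegral.integral_of_le hh, integral_pow]
    simp
  rw [h1, h3]
  simp_rw [h4]
  rw [Finset.prod_div_distrib]
  have hnum : ∏ l : Fin n, h ^ (el l + 1) = h ^ (n + 3) := by
    rw [Finset.prod_pow_eq_pow_sum]
    congr 1
    rw [Finset.sum_add_distrib]
    simp [hel, Finset.sum_add_distrib, Finset.sum_ite_eq']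
    ring
  rw [hnum]
  congr 1
  by_cases hij : j = i
  · subst hij
    have : ∀ l : Fin n, ((el l : ℝ) + 1) = if l = j then 4 else 1 := by
      intro l
      simp only [hel]
      split_ifs <;> norm_num
    simp_rw [this]
    simp [Finset.prod_ite_eq']
  · have : ∀ l : Fin n, ((el l : ℝ) + 1)
        = (if l = i then 2 else 1) * (if l = j then 3 else 1) := by
      intro l
      simp only [hel]
      by_cases h1 : l = i <;> by_cases h2 : l = j <;> subst_vars <;> simp_all <;> norm_num
    simp_rw [this]
    rw [Finset.prod_mul_distrib]
    simp [Finset.prod_ite_eq', hij]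
    norm_num

lemma integral_cube_weight (n : ℕ) (h : ℝ) (hh : 0 ≤ h) (i : Fin n) :
    ∫ x in cube n h, x i * ‖x‖ ^ 2 = (2 * (n:ℝ) + 1) / 12 * h ^ (n + 3) := by
  have hcont : ∀ j : Fin n,
      ContinuousOn (fun x : EuclideanSpace ℝ (Fin n) => x i * (x j) ^ 2) (cube n h) :=
    fun j => (((EuclideanSpace.proj i).continuous).mul
      (((EuclideanSpace.proj j).continuous).pow 2)).continuousOn
  have hI : ∀ j : Fin n, IntegrableOn
      (fun x : EuclideanSpace ℝ (Fin n) => x i * (x j) ^ 2) (cube n h) :=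
    fun j => (hcont j).integrableOn_compact (isCompact_cube n h)
  calc ∫ x in cube n h, x i * ‖x‖ ^ 2
      = ∫ x in cube n h, ∑ j, x i * (x j) ^ 2 := by
        apply setIntegral_congr_fun (measurableSet_cube n h)
        intro x _
        simp only []
        rw [norm_sq_eq, Finset.mul_sum]
    _ = ∑ j, ∫ x in cube n h, x i * (x j) ^ 2 :=
        integral_finset_sum _ (fun j _ => hI j)
    _ = ∑ j : Fin n, h ^ (n+3) / (if j = i then 4 else 6) :=
        Finset.sum_congr rfl fun j _ => integral_coord_mul_sq n h hh i j
    _ = (2 * (n:ℝ) + 1) / 12 * h ^ (n + 3) := by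
        have key : ∀ j : Fin n, h ^ (n+3) / ((if j = i then 4 else 6) : ℝ)
            = h ^ (n+3) * (1/6) + (if j = i then h ^ (n+3) * (1/12) else 0) := by
          intro j; split_ifs <;> ring
        simp_rw [key]
        rw [Finset.sum_add_distrib, Finset.sum_const, Finset.sum_ite_eq']
        simp only [Finset.card_univ, Fintype.card_fin, Finset.mem_univ, if_true,
          nsmul_eq_mul]
        ring

/-- Lemma 4.3 of the paper (hypercube case, all side lengths equal to `h`):
with `wᵢ = ∫ xᵢ·R₁(x⁰+x) dx` over `[0,h]ⁿ` and `D = h·Id`, one has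
`‖D⁻¹w‖ ≤ (√n/24)·((2n+1)/n)·L_{∇f}·Δ·Δ_S²`, where `Δ = hⁿ` and `Δ_S = h√n`. -/
theorem Dinv_w_bound_hypercube
    (n : ℕ) (hn : 1 ≤ n)
    (x0 : EuclideanSpace ℝ (Fin n))
    (h : ℝ) (hh : 0 < h)
    (f : EuclideanSpace ℝ (Fin n) → ℝ)
    (U : Set (EuclideanSpace ℝ (Fin n))) (hU : IsOpen U)
    (hsub : {y : EuclideanSpace ℝ (Fin n) | ∀ l, y l - x0 l ∈ Set.Icc (0 : ℝ) h} ⊆ U)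
    (hf : ContDiffOn ℝ 2 f U)
    (L : NNReal)
    (hlip : LipschitzOnWith L (gradient f)
      {y : EuclideanSpace ℝ (Fin n) | ∀ l, y l - x0 l ∈ Set.Icc (0 : ℝ) h})
    (w : Fin n → ℝ)
    (hw : ∀ i, w i = ∫ x in cube n h,
        x i * (f (x0 + x) - f x0 - (inner ℝ (gradient f x0) x : ℝ))) :
    ‖vecE (fun i => w i / h)‖ ≤
      (Real.sqrt n / 24) * ((2 * (n : ℝ) + 1) / n) * (L : ℝ) * (h ^ n)
        * (h * Real.sqrt n) ^ 2 := by
  classical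
  set M := {y : EuclideanSpace ℝ (Fin n) | ∀ l, y l - x0 l ∈ Set.Icc (0:ℝ) h} with hM
  have hconvM : Convex ℝ M := by
    intro y hy z hz α β hα hβ hαβ l
    have hcomb := (convex_Icc (0:ℝ) h) (hy l) (hz l) hα hβ hαβ
    have heq : (α • y + β • z) l - x0 l = α * (y l - x0 l) + β * (z l - x0 l) := by
      simp only [PiLp.add_apply, PiLp.smul_apply, smul_eq_mul]
      linear_combination (x0 l) * hαβ
    rw [heq]
    simpa using hcomb
  have hx0M : x0 ∈ M := by
    intro l
    simp [Set.mem_Icc, hh.le]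
  have hmemM : ∀ x ∈ cube n h, x0 + x ∈ M := by
    intro x hx l
    have := hx l
    simpa using this
  have hWbound : ∀ i, |w i| ≤ (L:ℝ) * (2*(n:ℝ)+1) / 24 * h^(n+3) := by
    intro i
    rw [hw i]
    have hgle : ∀ x ∈ cube n h,
        ‖x i * (f (x0 + x) - f x0 - (inner ℝ (gradient f x0) x : ℝ))‖
        ≤ (L:ℝ)/2 * (x i * ‖x‖^2) := by
      intro x hx
      have h1 := taylor_quad f U M hU hsub hconvM hf L hlip x0 x hx0M (hmemM x hx)
      have hxi : 0 ≤ x i := (hx i).1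
      rw [Real.norm_eq_abs, abs_mul, abs_of_nonneg hxi]
      calc x i * |f (x0 + x) - f x0 - (inner ℝ (gradient f x0) x : ℝ)|
          ≤ x i * ((L:ℝ)/2 * ‖x‖^2) := mul_le_mul_of_nonneg_left h1 hxi
        _ = (L:ℝ)/2 * (x i * ‖x‖^2) := by ring
    have hIb : IntegrableOn
        (fun x : EuclideanSpace ℝ (Fin n) => (L:ℝ)/2 * (x i * ‖x‖^2)) (cube n h) := by
      apply ContinuousOn.integrableOn_compact (isCompact_cube n h)
      exact (continuous_const.mul ((EuclideanSpace.proj i).continuous.mul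
        ((continuous_norm).pow 2))).continuousOn
    have hle := norm_integral_le_of_norm_le hIb
      ((ae_restrict_iff' (measurableSet_cube n h)).2 (ae_of_all _ hgle))
    rw [← Real.norm_eq_abs]
    calc ‖∫ x in cube n h, x i * (f (x0 + x) - f x0 - (inner ℝ (gradient f x0) x : ℝ))‖
        ≤ ∫ x in cube n h, (L:ℝ)/2 * (x i * ‖x‖^2) := hle
      _ = (L:ℝ)/2 * ∫ x in cube n h, x i * ‖x‖^2 := MeasureTheory.integral_const_mul _ _
      _ = (L:ℝ)/2 * ((2*(n:ℝ)+1)/12 * h^(n+3)) := by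
          rw [integral_cube_weight n h hh.le i]
      _ = (L:ℝ) * (2*(n:ℝ)+1) / 24 * h^(n+3) := by ring
  set B : ℝ := (L:ℝ) * (2*(n:ℝ)+1) / 24 * h^(n+2) with hB
  have hB0 : 0 ≤ B := by positivity
  have hvi : ∀ i, |w i / h| ≤ B := by
    intro i
    rw [abs_div, abs_of_pos hh, div_le_iff₀ hh]
    calc |w i| ≤ (L:ℝ) * (2*(n:ℝ)+1) / 24 * h^(n+3) := hWbound i
      _ = B * h := by rw [hB, pow_succ]; ring
  have happ : ∀ i, (vecE fun i => w i / h) i = w i / h := fun i => rfl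
  have hnorm : ‖vecE (fun i => w i / h)‖ ≤ Real.sqrt n * B := by
    rw [EuclideanSpace.norm_eq]
    have hsum : ∑ i, ‖(vecE fun i => w i / h) i‖^2 ≤ (n:ℝ) * B^2 := by
      calc ∑ i, ‖(vecE fun i => w i / h) i‖^2
          ≤ ∑ _i : Fin n, B^2 := by
            apply Finset.sum_le_sum
            intro i _
            rw [happ i, Real.norm_eq_abs, ← sq_abs]
            rw [abs_abs]
            exact pow_le_pow_left₀ (abs_nonneg _) (hvi i) 2
        _ = (n:ℝ) * B^2 := by
            rw [Finset.sum_const, Finset.card_univ, Fintype.card_fin, nsmul_eq_mul]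
    calc Real.sqrt (∑ i, ‖(vecE fun i => w i / h) i‖^2)
        ≤ Real.sqrt ((n:ℝ) * B^2) := Real.sqrt_le_sqrt hsum
      _ = Real.sqrt n * B := by
          rw [Real.sqrt_mul (Nat.cast_nonneg n), Real.sqrt_sq hB0]
  have hn0 : (n:ℝ) ≠ 0 := by
    have : (0:ℝ) < n := by exact_mod_cast Nat.lt_of_lt_of_le Nat.zero_lt_one hn
    exact ne_of_gt this
  have hRHS : (Real.sqrt n / 24) * ((2 * (n : ℝ) + 1) / n) * (L : ℝ) * (h ^ n)
      * (h * Real.sqrt n) ^ 2 = Real.sqrt n * B := by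
    rw [hB, mul_pow, Real.sq_sqrt (Nat.cast_nonneg n)]
    field_simp
    ring
  rw [hRHS]
  exact hnorm

end
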